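/- For all natural numbers m, n, k, one has C(m+1, n, k+1) = 2^{n-k-1} · binom(n, k+1) + Σ_{i=0}^{m} C(i, n, k), where the term 2^{n-k-1} · binom(n, k+1) is interpreted as 0 when k+1 > n (note binom(n,k+1) = 0 in that case). In particular, if n ≤ k then C(m+1, n, k+1) = Σ_{i=0}^{m} C(i, n, k). -/

import Mathlib

open Finset

/-- The set of ternary words of length `m + n` (as functions `Fin (m+n) → Fin 3`)
having exactly `k` letters equal to `2` and no letter equal to `0` among the
first `m` letters. -/
def ternaryWords (m n k : ℕ) : Finset (Fin (m + n) → Fin 3) :=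
  univ.filter fun w =>
    (univ.filter fun i => w i = 2).card = k ∧ ∀ i : Fin (m + n), (i : ℕ) < m → w i ≠ 0

/-- `C m n k` is the number of ternary words of length `m + n` with exactly `k`
twos and no zero among the first `m` letters; it equals the inset number
`{m,n choose k}` of Janjić–Petković. -/
def C (m n k : ℕ) : ℕ := (ternaryWords m n k).card

lemma card_filter_len {a b : ℕ} (h : a = b) (P : (Fin a → Fin 3) → Prop) [DecidablePred P] :
    (univ.filter P).card
      = (univ.filter fun w : Fin b → Fin 3 => P (w ∘ Fin.cast h)).card := by
  subst h; simp [Function.comp_def]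

lemma card_filter_idx {a b : ℕ} (h : a = b) (q : Fin b → Prop) [DecidablePred q] :
    (univ.filter fun i : Fin a => q (Fin.cast h i)).card = (univ.filter q).card := by
  subst h; simp

lemma forall_cast_guard {a b m' : ℕ} (h : a = b) (f : Fin b → Fin 3) :
    (∀ i : Fin a, (i:ℕ) < m' → f (Fin.cast h i) ≠ 0) ↔ (∀ j : Fin b, (j:ℕ) < m' → f j ≠ 0) := by
  subst h
  constructor <;> intro H i hi <;> exact H i hi

lemma forall_cons_guard {N m : ℕ} (a : Fin 3) (t : Fin N → Fin 3) :
    (∀ j : Fin (N+1), (j:ℕ) < m+1 → Fin.cons (α := fun _ => Fin 3) a t j ≠ 0)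
      ↔ (a ≠ 0 ∧ ∀ i : Fin N, (i:ℕ) < m → t i ≠ 0) := by
  rw [Fin.forall_fin_succ]
  simp [Nat.succ_lt_succ_iff]

lemma card_filter_cons {N : ℕ} (P : (Fin (N+1) → Fin 3) → Prop) [DecidablePred P] :
    (univ.filter P).card = ∑ a : Fin 3, (univ.filter fun t : Fin N → Fin 3 => P (Fin.cons a t)).card := by
  simp only [Finset.card_filter]
  rw [← Equiv.sum_comp (Fin.consEquiv fun _ => Fin 3) (fun w => if P w then 1 else 0)]
  rw [Fintype.sum_prod_type]
  rfl

lemma count_cons {N : ℕ} (a : Fin 3) (t : Fin N → Fin 3) :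
    (univ.filter fun j : Fin (N+1) => Fin.cons (α := fun _ => Fin 3) a t j = 2).card
      = (if a = 2 then 1 else 0) + (univ.filter fun i : Fin N => t i = 2).card := by
  simp only [Finset.card_filter, Fin.sum_univ_succ, Fin.cons_zero, Fin.cons_succ]

lemma count_cons0 {N : ℕ} (t : Fin N → Fin 3) :
    (univ.filter fun j : Fin (N+1) => Fin.cons (α := fun _ => Fin 3) 0 t j = 2).card
      = (univ.filter fun i : Fin N => t i = 2).card := by
  rw [count_cons, if_neg (show ¬(0:Fin 3) = 2 by decide), zero_add]

lemma count_cons1 {N : ℕ} (t : Fin N → Fin 3) :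
    (univ.filter fun j : Fin (N+1) => Fin.cons (α := fun _ => Fin 3) 1 t j = 2).card
      = (univ.filter fun i : Fin N => t i = 2).card := by
  rw [count_cons, if_neg (show ¬(1:Fin 3) = 2 by decide), zero_add]

lemma count_cons2 {N : ℕ} (t : Fin N → Fin 3) :
    (univ.filter fun j : Fin (N+1) => Fin.cons (α := fun _ => Fin 3) 2 t j = 2).card
      = (univ.filter fun i : Fin N => t i = 2).card + 1 := by
  rw [count_cons, if_pos rfl, add_comm]

lemma count_words : ∀ n t : ℕ,
    (univ.filter fun w : Fin n → Fin 3 => (univ.filter fun i => w i = 2).card = t).card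
      = 2 ^ (n - t) * n.choose t := by
  intro n
  induction n with
  | zero => intro t; cases t <;> simp
  | succ n ih =>
    intro t
    rw [card_filter_cons]
    rw [Fin.sum_univ_three]
    simp only [count_cons0, count_cons1, count_cons2]
    cases t with
    | zero =>
      simp only [Nat.succ_ne_zero, Finset.filter_false, Finset.card_empty, ih,
        Nat.choose_zero_right, Nat.sub_zero, pow_succ]
      omega
    | succ t =>
      simp only [Nat.add_right_cancel_iff, ih]
      rw [Nat.choose_succ_succ]
      have e1 : n + 1 - (t+1) = n - t := by omega
      rcases le_or_gt (t+1) n with h | h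
      · have e2 : n - t = (n - (t+1)) + 1 := by omega
        rw [e1, e2, pow_succ]
        ring
      · rw [Nat.choose_eq_zero_of_lt h, e1]
        ring

lemma count_transport {a b : ℕ} (h : a = b) (t : ℕ) :
    (univ.filter fun w : Fin a → Fin 3 => (univ.filter fun i => w i = 2).card = t).card =
    (univ.filter fun w : Fin b → Fin 3 => (univ.filter fun i => w i = 2).card = t).card := by
  subst h; rfl

lemma C_zero (n t : ℕ) : C 0 n t = 2 ^ (n - t) * n.choose t := by
  show (ternaryWords 0 n t).card = _
  rw [ternaryWords]
  simp only [Nat.not_lt_zero, false_implies, implies_true, and_true]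
  rw [count_transport (show 0 + n = n by omega), count_words]

lemma C_rec (m n k : ℕ) : C (m+1) n (k+1) = C m n (k+1) + C m n k := by
  have h : (m+1+n) = (m+n)+1 := by omega
  show (ternaryWords (m+1) n (k+1)).card = _
  rw [ternaryWords, card_filter_len h, card_filter_cons, Fin.sum_univ_three]
  have e0 : ∀ (a : Fin 3) (t : Fin (m+n) → Fin 3),
      (Finset.filter (fun i : Fin (m+1+n) => Fin.cons (α := fun _ => Fin 3) a t (Fin.cast h i) = 2) univ).card
        = (Finset.filter (fun j : Fin (m+n+1) => Fin.cons (α := fun _ => Fin 3) a t j = 2) univ).card :=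
    fun a t => card_filter_idx h (fun j => Fin.cons (α := fun _ => Fin 3) a t j = 2)
  simp only [Function.comp_def, forall_cast_guard h, forall_cons_guard, e0,
    count_cons0, count_cons1, count_cons2]
  simp only [eq_false (show ¬(0:Fin 3) ≠ 0 by decide), eq_true (show (1:Fin 3) ≠ 0 by decide),
    eq_true (show (2:Fin 3) ≠ 0 by decide), false_and, and_false, true_and,
    Finset.filter_false, Finset.card_empty, Nat.add_right_cancel_iff, zero_add]
  rfl

theorem stmt_7 (m n k : ℕ) :
    C (m + 1) n (k + 1) =
        2 ^ (n - k - 1) * n.choose (k + 1) + ∑ i ∈ Finset.range (m + 1), C i n k ∧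
      (n ≤ k → C (m + 1) n (k + 1) = ∑ i ∈ Finset.range (m + 1), C i n k) := by
  have key : ∀ M, C (M+1) n (k+1) = C 0 n (k+1) + ∑ i ∈ Finset.range (M+1), C i n k := by
    intro M
    induction M with
    | zero => rw [Finset.sum_range_one]; exact C_rec 0 n k
    | succ M ih => rw [Finset.sum_range_succ, C_rec, ih, Nat.add_assoc]
  have h0 : C 0 n (k+1) = 2 ^ (n - k - 1) * n.choose (k+1) := by
    rw [C_zero, Nat.sub_sub]
  constructor
  · rw [key m, h0]
  · intro hnk
    rw [key m, h0, Nat.choose_eq_zero_of_lt (by omega)]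
    simp
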